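/- Let S, C_1, ..., C_k be nonempty closed convex subsets of R^d, ε > 0, γ_j > 0, and let g_ε(x | y) = (1/2) Σ_j γ_j ‖x - P_{C_j}(y)‖² / √(dist(y, C_j)² + ε) + c(y), where c(y) is chosen so that g_ε(y | y) = D_ε(y). Then g_ε majorizes D_ε: g_ε(x | y) ≥ D_ε(x) for all x, y, with equality at x = y. Consequently, the MM iterates x_{m+1} = argmin_{x ∈ S} g_ε(x | x_m) satisfy D_ε(x_{m+1}) ≤ D_ε(x_m). -/

import Mathlib

open Metric

lemma sqrt_le_tangent (u m : ℝ) (hu : 0 ≤ u) (hm : 0 < m) :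
    Real.sqrt u ≤ Real.sqrt m + (u - m) / (2 * Real.sqrt m) := by
  have hsm : 0 < Real.sqrt m := Real.sqrt_pos.mpr hm
  rw [← sub_le_iff_le_add', le_div_iff₀ (by positivity)]
  have h1 : Real.sqrt u ^ 2 = u := Real.sq_sqrt hu
  have h2 : Real.sqrt m ^ 2 = m := Real.sq_sqrt hm.le
  nlinarith [sq_nonneg (Real.sqrt u - Real.sqrt m)]

theorem MM_majorization_and_descent
    {d k : ℕ} (S : Set (EuclideanSpace ℝ (Fin d)))
    (hSne : S.Nonempty) (hScl : IsClosed S) (hSconv : Convex ℝ S)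
    (C : Fin k → Set (EuclideanSpace ℝ (Fin d)))
    (hne : ∀ j, (C j).Nonempty) (hcl : ∀ j, IsClosed (C j))
    (hconv : ∀ j, Convex ℝ (C j))
    (γ : Fin k → ℝ) (hγ : ∀ j, 0 < γ j) (ε : ℝ) (hε : 0 < ε)
    (PC : Fin k → EuclideanSpace ℝ (Fin d) → EuclideanSpace ℝ (Fin d))
    (hPC : ∀ j z, PC j z ∈ C j ∧ ‖z - PC j z‖ = infDist z (C j))
    (Dε : EuclideanSpace ℝ (Fin d) → ℝ)
    (hDε : ∀ x, Dε x = ∑ j, γ j * Real.sqrt ((infDist x (C j)) ^ 2 + ε))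
    (g : EuclideanSpace ℝ (Fin d) → EuclideanSpace ℝ (Fin d) → ℝ)
    (hg : ∀ x y, g x y =
      (1 / 2) * ∑ j, γ j * ‖x - PC j y‖ ^ 2 / Real.sqrt ((infDist y (C j)) ^ 2 + ε)
      + (Dε y -
        (1 / 2) * ∑ j, γ j * ‖y - PC j y‖ ^ 2 / Real.sqrt ((infDist y (C j)) ^ 2 + ε))) :
    (∀ x y, Dε x ≤ g x y) ∧ (∀ y, g y y = Dε y) ∧
    (∀ xs : ℕ → EuclideanSpace ℝ (Fin d), (∀ m, xs m ∈ S) →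
      (∀ m, ∀ z ∈ S, g (xs (m + 1)) (xs m) ≤ g z (xs m)) →
      ∀ m, Dε (xs (m + 1)) ≤ Dε (xs m)) := by
  have hmaj : ∀ x y, Dε x ≤ g x y := by
    intro x y
    rw [hg, hDε x, hDε y]
    have hsum : (1 / 2 : ℝ) * (∑ j, γ j * ‖x - PC j y‖ ^ 2 / Real.sqrt ((infDist y (C j)) ^ 2 + ε))
        + ((∑ j, γ j * Real.sqrt ((infDist y (C j)) ^ 2 + ε)) -
          (1 / 2) * ∑ j, γ j * ‖y - PC j y‖ ^ 2 / Real.sqrt ((infDist y (C j)) ^ 2 + ε))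
        = ∑ j, ((1 / 2 : ℝ) * (γ j * ‖x - PC j y‖ ^ 2 / Real.sqrt ((infDist y (C j)) ^ 2 + ε))
            + (γ j * Real.sqrt ((infDist y (C j)) ^ 2 + ε)
            - (1 / 2) * (γ j * ‖y - PC j y‖ ^ 2 / Real.sqrt ((infDist y (C j)) ^ 2 + ε)))) := by
      rw [Finset.sum_add_distrib, Finset.sum_sub_distrib, ← Finset.mul_sum, ← Finset.mul_sum]
    rw [hsum]
    apply Finset.sum_le_sum
    intro j _
    set m := (infDist y (C j)) ^ 2 + ε with hmdef
    have hm : 0 < m := by positivity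
    have hsm : 0 < Real.sqrt m := Real.sqrt_pos.mpr hm
    have hyd : ‖y - PC j y‖ = infDist y (C j) := (hPC j y).2
    have hle : infDist x (C j) ≤ ‖x - PC j y‖ := by
      rw [← dist_eq_norm]
      exact infDist_le_dist_of_mem (hPC j y).1
    have hx0 : 0 ≤ infDist x (C j) := infDist_nonneg
    have h1 : Real.sqrt ((infDist x (C j)) ^ 2 + ε) ≤ Real.sqrt (‖x - PC j y‖ ^ 2 + ε) := by
      apply Real.sqrt_le_sqrt
      have := pow_le_pow_left₀ hx0 hle 2
      linarith
    have h2 := sqrt_le_tangent (‖x - PC j y‖ ^ 2 + ε) m (by positivity) hm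
    have h3 : γ j * Real.sqrt ((infDist x (C j)) ^ 2 + ε)
        ≤ γ j * (Real.sqrt m + (‖x - PC j y‖ ^ 2 + ε - m) / (2 * Real.sqrt m)) := by
      apply mul_le_mul_of_nonneg_left (le_trans h1 h2) (hγ j).le
    calc γ j * Real.sqrt ((infDist x (C j)) ^ 2 + ε)
        ≤ γ j * (Real.sqrt m + (‖x - PC j y‖ ^ 2 + ε - m) / (2 * Real.sqrt m)) := h3
      _ = (1 / 2 : ℝ) * (γ j * ‖x - PC j y‖ ^ 2 / Real.sqrt m)
            + (γ j * Real.sqrt m - (1 / 2) * (γ j * ‖y - PC j y‖ ^ 2 / Real.sqrt m)) := by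
          rw [hyd, hmdef]
          field_simp
          ring
  have heq : ∀ y, g y y = Dε y := by
    intro y; rw [hg]; ring
  refine ⟨hmaj, heq, ?_⟩
  intro xs hmem hargmin m
  calc Dε (xs (m + 1)) ≤ g (xs (m + 1)) (xs m) := hmaj _ _
    _ ≤ g (xs m) (xs m) := hargmin m _ (hmem m)
    _ = Dε (xs m) := heq _
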